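/- Let x : {0,…,N−1} → ℝ be deterministic, let λ be a real relaxation parameter, and define z(n) = λ·d(n)·(x(n) + q(n)) + (1 − λ·d(n))·w(n), where for each n: d(n) is Bernoulli(p), q(n) takes values Δ/2 and −Δ/2 with probability 1/2 each, w(n) is an integrable real random variable, and d(n) is independent of q(n) and the pair (d(n), q(n)) is independent of w(n). Then for every frequency index m, E[Z(m)] = λ·p·X(m) + (1 − λ·p)·E[W(m)], where Z, X, W denote the discrete Fourier transforms of z, x, w respectively. -/

import Mathlib

open MeasureTheory ProbabilityTheory

/-- The DFT kernel `e^{-2πi n m / N}`. -/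
noncomputable def dftKernel (N : ℕ) (n m : Fin N) : ℂ :=
  Complex.exp (-2 * (Real.pi : ℂ) * Complex.I * ((n : ℕ) : ℂ) * ((m : ℕ) : ℂ) / ((N : ℕ) : ℂ))

lemma integral_two_point {Ω : Type*} [MeasurableSpace Ω] (μ : Measure Ω)
    {f : Ω → ℝ} (hf : Measurable f) (a b : ℝ) (ca cb : ENNReal)
    (hca : ca ≠ ⊤) (hcb : cb ≠ ⊤)
    (hlaw : Measure.map f μ = ca • Measure.dirac a + cb • Measure.dirac b) :
    ∫ ω, f ω ∂μ = ca.toReal * a + cb.toReal * b := by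
  have : ∫ ω, f ω ∂μ = ∫ y, y ∂(Measure.map f μ) :=
    (integral_map hf.aemeasurable aestronglyMeasurable_id).symm
  rw [this, hlaw, integral_add_measure
      ((((integrable_const a).congr (ae_eq_dirac (fun y : ℝ => y)).symm)).smul_measure hca)
      ((((integrable_const b).congr (ae_eq_dirac (fun y : ℝ => y)).symm)).smul_measure hcb),
    integral_smul_measure, integral_smul_measure, integral_dirac, integral_dirac]
  simp [smul_eq_mul]

lemma ae_two_point {Ω : Type*} [MeasurableSpace Ω] (μ : Measure Ω)
    {f : Ω → ℝ} (hf : Measurable f) (a b : ℝ) (ca cb : ENNReal)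
    (hlaw : Measure.map f μ = ca • Measure.dirac a + cb • Measure.dirac b) :
    ∀ᵐ ω ∂μ, f ω = a ∨ f ω = b := by
  have hs : MeasurableSet ({a, b} : Set ℝ) := ((Set.finite_singleton b).insert a).measurableSet
  have : μ (f ⁻¹' ({a, b} : Set ℝ)ᶜ) = 0 := by
    rw [← Measure.map_apply hf hs.compl, hlaw]
    simp [Measure.dirac_apply' _ hs.compl, Set.indicator_apply]
  filter_upwards [measure_eq_zero_iff_ae_notMem.mp this] with ω hω
  by_contra hc
  push_neg at hc
  exact hω (by simp [hc.1, hc.2])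

/-- One-step expectation recursion for the IMAT iteration:
with `z(n) = λ·d(n)·(x(n) + q(n)) + (1 − λ·d(n))·w(n)`, where `d(n) ~ Bernoulli(p)`,
`q(n) = ±Δ/2` equiprobable, `w(n)` integrable, `d(n)` independent of `q(n)` and the
pair `(d(n), q(n))` independent of `w(n)`, one has
`E[Z(m)] = λ·p·X(m) + (1 − λ·p)·E[W(m)]` for every frequency index `m`. -/
theorem imat_one_step_expectation
    {Ω : Type*} [MeasurableSpace Ω] (μ : Measure Ω) [IsProbabilityMeasure μ]
    (N : ℕ) (hN : 0 < N) (x : Fin N → ℝ) (p Δ lam : ℝ)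
    (hp0 : 0 ≤ p) (hp1 : p ≤ 1) (hΔ : 0 < Δ)
    (d q w : Fin N → Ω → ℝ)
    (hd : ∀ n, Measurable (d n)) (hq : ∀ n, Measurable (q n))
    (hw : ∀ n, Integrable (w n) μ)
    (hlawd : ∀ n, Measure.map (d n) μ =
      ENNReal.ofReal (1 - p) • Measure.dirac (0 : ℝ) +
      ENNReal.ofReal p • Measure.dirac (1 : ℝ))
    (hlawq : ∀ n, Measure.map (q n) μ =
      (1 / 2 : ENNReal) • Measure.dirac (Δ / 2) +
      (1 / 2 : ENNReal) • Measure.dirac (-(Δ / 2)))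
    (hdq : ∀ n, IndepFun (d n) (q n) μ)
    (hdqw : ∀ n, IndepFun (fun ω => (d n ω, q n ω)) (w n) μ)
    (m : Fin N) :
    (∫ ω, ∑ n : Fin N,
        ((lam * d n ω * (x n + q n ω) + (1 - lam * d n ω) * w n ω : ℝ) : ℂ) *
          dftKernel N n m ∂μ) =
      ((lam * p : ℝ) : ℂ) * (∑ n : Fin N, (x n : ℂ) * dftKernel N n m) +
      ((1 - lam * p : ℝ) : ℂ) * ∫ ω, ∑ n : Fin N, (w n ω : ℂ) * dftKernel N n m ∂μ := by
  -- a.e. bounds on d and q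
  have hDb : ∀ n, ∀ᵐ ω ∂μ, ‖d n ω‖ ≤ 1 := by
    intro n
    filter_upwards [ae_two_point μ (hd n) 0 1 _ _ (hlawd n)] with ω hω
    rcases hω with h | h <;> simp [h]
  have hQb : ∀ n, ∀ᵐ ω ∂μ, ‖q n ω‖ ≤ Δ / 2 := by
    intro n
    filter_upwards [ae_two_point μ (hq n) (Δ / 2) (-(Δ / 2)) _ _ (hlawq n)] with ω hω
    rcases hω with h | h <;> rw [h] <;>
      simp [Real.norm_eq_abs, abs_div, abs_of_pos hΔ]
  -- integrability
  have hDint : ∀ n, Integrable (d n) μ := fun n =>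
    Integrable.mono' (integrable_const 1) (hd n).aestronglyMeasurable (hDb n)
  have hDQint : ∀ n, Integrable (fun ω => d n ω * q n ω) μ := by
    intro n
    refine Integrable.mono' (integrable_const (Δ / 2))
      ((hd n).mul (hq n)).aestronglyMeasurable ?_
    filter_upwards [hDb n, hQb n] with ω h1 h2
    calc ‖d n ω * q n ω‖ = ‖d n ω‖ * ‖q n ω‖ := norm_mul _ _
      _ ≤ 1 * (Δ / 2) := mul_le_mul h1 h2 (norm_nonneg _) zero_le_one
      _ = Δ / 2 := one_mul _
  have hDWint : ∀ n, Integrable (fun ω => d n ω * w n ω) μ := by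
    intro n
    refine Integrable.mono' (hw n).norm
      ((hd n).aestronglyMeasurable.mul (hw n).1) ?_
    filter_upwards [hDb n] with ω h1
    calc ‖d n ω * w n ω‖ = ‖d n ω‖ * ‖w n ω‖ := norm_mul _ _
      _ ≤ 1 * ‖w n ω‖ := mul_le_mul_of_nonneg_right h1 (norm_nonneg _)
      _ = ‖w n ω‖ := one_mul _
  -- expectations
  have ED : ∀ n, ∫ ω, d n ω ∂μ = p := by
    intro n
    rw [integral_two_point μ (hd n) 0 1 _ _ ENNReal.ofReal_ne_top ENNReal.ofReal_ne_top
      (hlawd n)]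
    simp [ENNReal.toReal_ofReal hp0]
  have EQ : ∀ n, ∫ ω, q n ω ∂μ = 0 := by
    intro n
    rw [integral_two_point μ (hq n) (Δ / 2) (-(Δ / 2)) _ _ (by simp) (by simp) (hlawq n)]
    simp
  have EDQ : ∀ n, ∫ ω, d n ω * q n ω ∂μ = 0 := by
    intro n
    have h := (hdq n).integral_mul_eq_mul_integral (hd n).aestronglyMeasurable (hq n).aestronglyMeasurable
    rw [EQ n, mul_zero] at h
    simpa using h
  have hDW : ∀ n, IndepFun (d n) (w n) μ := fun n =>
    (hdqw n).comp measurable_fst measurable_id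
  have EDW : ∀ n, ∫ ω, d n ω * w n ω ∂μ = p * ∫ ω, w n ω ∂μ := by
    intro n
    have h := (hDW n).integral_mul_eq_mul_integral (hd n).aestronglyMeasurable (hw n).1
    rw [ED n] at h
    simpa using h
  -- integrability and value of z n
  have hzeq : ∀ n, (fun ω => lam * d n ω * (x n + q n ω) + (1 - lam * d n ω) * w n ω)
      = fun ω => (lam * x n) * d n ω + lam * (d n ω * q n ω) + w n ω
        - lam * (d n ω * w n ω) := by
    intro n; funext ω; ring
  have hzInt : ∀ n, Integrable
      (fun ω => lam * d n ω * (x n + q n ω) + (1 - lam * d n ω) * w n ω) μ := by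
    intro n
    rw [hzeq n]
    exact ((((hDint n).const_mul _).add ((hDQint n).const_mul _)).add (hw n)).sub
      ((hDWint n).const_mul _)
  have Ez : ∀ n, ∫ ω, (lam * d n ω * (x n + q n ω) + (1 - lam * d n ω) * w n ω) ∂μ
      = lam * p * x n + (1 - lam * p) * ∫ ω, w n ω ∂μ := by
    intro n
    have i1 : Integrable (fun ω => lam * x n * d n ω) μ := (hDint n).const_mul _
    have i2 : Integrable (fun ω => lam * (d n ω * q n ω)) μ := (hDQint n).const_mul _
    have i4 : Integrable (fun ω => lam * (d n ω * w n ω)) μ := (hDWint n).const_mul _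
    have i12 : Integrable (fun ω => lam * x n * d n ω + lam * (d n ω * q n ω)) μ := i1.add i2
    have i123 : Integrable
        (fun ω => lam * x n * d n ω + lam * (d n ω * q n ω) + w n ω) μ := i12.add (hw n)
    rw [hzeq n, integral_sub i123 i4, integral_add i12 (hw n), integral_add i1 i2,
      integral_const_mul, integral_const_mul, integral_const_mul,
      ED n, EDQ n, EDW n]
    ring
  -- complex level
  have h1 : (∫ ω, ∑ n : Fin N,
      ((lam * d n ω * (x n + q n ω) + (1 - lam * d n ω) * w n ω : ℝ) : ℂ) *
        dftKernel N n m ∂μ)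
      = ∑ n : Fin N, ∫ ω,
      ((lam * d n ω * (x n + q n ω) + (1 - lam * d n ω) * w n ω : ℝ) : ℂ) *
        dftKernel N n m ∂μ :=
    integral_finset_sum Finset.univ (fun n _ => ((hzInt n).ofReal.mul_const (dftKernel N n m)))
  have h2 : (∫ ω, ∑ n : Fin N, (w n ω : ℂ) * dftKernel N n m ∂μ)
      = ∑ n : Fin N, ∫ ω, (w n ω : ℂ) * dftKernel N n m ∂μ :=
    integral_finset_sum Finset.univ (fun n _ => ((hw n).ofReal.mul_const (dftKernel N n m)))
  rw [h1, h2]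
  have key : ∀ n : Fin N, ∫ ω,
      ((lam * d n ω * (x n + q n ω) + (1 - lam * d n ω) * w n ω : ℝ) : ℂ)
        * dftKernel N n m ∂μ
      = ((lam * p * x n + (1 - lam * p) * ∫ ω, w n ω ∂μ : ℝ) : ℂ) * dftKernel N n m := by
    intro n
    rw [integral_mul_const]
    congr 1
    rw [← Ez n]
    exact integral_ofReal
  have keyw : ∀ n : Fin N, ∫ ω, (w n ω : ℂ) * dftKernel N n m ∂μ
      = ((∫ ω, w n ω ∂μ : ℝ) : ℂ) * dftKernel N n m := by
    intro n
    rw [integral_mul_const]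
    congr 1
    exact integral_ofReal
  simp only [key, keyw, Finset.mul_sum]
  rw [← Finset.sum_add_distrib]
  refine Finset.sum_congr rfl fun n _ => ?_
  push_cast
  ring
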